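/- Let P ∈ ℝ³, n a unit vector, and Π the plane through P with normal n. Let c₁^(p), …, c_n^(p) ∈ Π be fixed points with c_ℓ^(p) ≠ P for all ℓ, and suppose points c₁, …, c_n satisfy the affine recurrence c_ℓ = α_ℓ P + β_ℓ c_{ℓ−2} + γ_ℓ c_{ℓ−1} with α_ℓ + β_ℓ + γ_ℓ = 1 for ℓ ≥ 3 (barycentric combinations). Then the minimizer over (c₁, c₂) ∈ (ℝ³)² of φ = Σ_ℓ ‖c_ℓ − c_ℓ^(p)‖² / ‖c_ℓ^(p) − P‖² exists, is unique, and all resulting points c₁, …, c_n lie on the plane Π. -/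

import Mathlib

open scoped RealInnerProductSpace

/-- The sequence of control points around a vertex: `c₁, c₂` are free and the
remaining points are barycentric combinations `c_ℓ = α_ℓ P + β_ℓ c_{ℓ-2} + γ_ℓ c_{ℓ-1}`. -/
noncomputable def seqC (P : EuclideanSpace ℝ (Fin 3)) (α β γ : ℕ → ℝ)
    (c1 c2 : EuclideanSpace ℝ (Fin 3)) : ℕ → EuclideanSpace ℝ (Fin 3)
  | 0 => c1
  | 1 => c1
  | 2 => c2
  | (ℓ + 3) => α (ℓ + 3) • P + β (ℓ + 3) • seqC P α β γ c1 c2 (ℓ + 1)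
      + γ (ℓ + 3) • seqC P α β γ c1 c2 (ℓ + 2)

lemma seqC_add (α β γ : ℕ → ℝ) (a a' b b' : EuclideanSpace ℝ (Fin 3)) :
    ∀ ℓ, seqC 0 α β γ (a + a') (b + b') ℓ
      = seqC 0 α β γ a b ℓ + seqC 0 α β γ a' b' ℓ := by
  intro ℓ
  induction ℓ using Nat.strong_induction_on with
  | _ ℓ ih =>
    match ℓ, ih with
    | 0, _ => rfl
    | 1, _ => rfl
    | 2, _ => rfl
    | (k+3), ih =>
      rw [seqC, seqC, seqC, ih (k+1) (by omega), ih (k+2) (by omega)]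
      module

lemma seqC_smul (α β γ : ℕ → ℝ) (t : ℝ) (a b : EuclideanSpace ℝ (Fin 3)) :
    ∀ ℓ, seqC 0 α β γ (t • a) (t • b) ℓ = t • seqC 0 α β γ a b ℓ := by
  intro ℓ
  induction ℓ using Nat.strong_induction_on with
  | _ ℓ ih =>
    match ℓ, ih with
    | 0, _ => rfl
    | 1, _ => rfl
    | 2, _ => rfl
    | (k+3), ih =>
      rw [seqC, seqC, ih (k+1) (by omega), ih (k+2) (by omega)]
      module

lemma seqC_translate (P : EuclideanSpace ℝ (Fin 3)) (α β γ : ℕ → ℝ)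
    (hbary : ∀ ℓ, 3 ≤ ℓ → α ℓ + β ℓ + γ ℓ = 1) (c1 c2 : EuclideanSpace ℝ (Fin 3)) :
    ∀ ℓ, seqC P α β γ c1 c2 ℓ = P + seqC 0 α β γ (c1 - P) (c2 - P) ℓ := by
  intro ℓ
  induction ℓ using Nat.strong_induction_on with
  | _ ℓ ih =>
    match ℓ, ih with
    | 0, _ => show c1 = P + (c1 - P); abel
    | 1, _ => show c1 = P + (c1 - P); abel
    | 2, _ => show c2 = P + (c2 - P); abel
    | (k+3), ih =>
      rw [seqC, seqC, ih (k+1) (by omega), ih (k+2) (by omega)]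
      have h := hbary (k+3) (by omega)
      match_scalars <;> linarith

lemma seqC_inner_zero (α β γ : ℕ → ℝ) (nv a b : EuclideanSpace ℝ (Fin 3))
    (ha : ⟪a, nv⟫ = 0) (hb : ⟪b, nv⟫ = 0) :
    ∀ ℓ, ⟪seqC 0 α β γ a b ℓ, nv⟫ = 0 := by
  intro ℓ
  induction ℓ using Nat.strong_induction_on with
  | _ ℓ ih =>
    match ℓ, ih with
    | 0, _ => exact ha
    | 1, _ => exact ha
    | 2, _ => exact hb
    | (k+3), ih =>
      rw [seqC]
      simp only [inner_add_left, real_inner_smul_left, smul_zero, inner_zero_left,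
        ih (k+1) (by omega), ih (k+2) (by omega)]
      ring

lemma seqC_normal (α β γ : ℕ → ℝ) (nv : EuclideanSpace ℝ (Fin 3)) (s t : ℝ) :
    ∀ ℓ, ∃ r : ℝ, seqC 0 α β γ (s • nv) (t • nv) ℓ = r • nv := by
  intro ℓ
  induction ℓ using Nat.strong_induction_on with
  | _ ℓ ih =>
    match ℓ, ih with
    | 0, _ => exact ⟨s, rfl⟩
    | 1, _ => exact ⟨s, rfl⟩
    | 2, _ => exact ⟨t, rfl⟩
    | (k+3), ih =>
      obtain ⟨r1, h1⟩ := ih (k+1) (by omega)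
      obtain ⟨r2, h2⟩ := ih (k+2) (by omega)
      refine ⟨β (k+3) * r1 + γ (k+3) * r2, ?_⟩
      rw [seqC, h1, h2]
      module

/-- The bundled linear least-squares map. -/
noncomputable def Amap (n : ℕ) (P : EuclideanSpace ℝ (Fin 3)) (cp : ℕ → EuclideanSpace ℝ (Fin 3))
    (α β γ : ℕ → ℝ) :
    (EuclideanSpace ℝ (Fin 3) × EuclideanSpace ℝ (Fin 3)) →ₗ[ℝ]
      PiLp 2 (fun _ : ↥(Finset.Icc 1 n) => EuclideanSpace ℝ (Fin 3)) where
  toFun d := WithLp.toLp 2 (fun ℓ : ↥(Finset.Icc 1 n) => (‖cp ℓ.1 - P‖)⁻¹ • seqC 0 α β γ d.1 d.2 ℓ.1)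
  map_add' d d' := by
    refine PiLp.ext fun ℓ => ?_
    show (‖cp ℓ.1 - P‖)⁻¹ • seqC 0 α β γ (d.1 + d'.1) (d.2 + d'.2) ℓ.1
      = (‖cp ℓ.1 - P‖)⁻¹ • seqC 0 α β γ d.1 d.2 ℓ.1
        + (‖cp ℓ.1 - P‖)⁻¹ • seqC 0 α β γ d'.1 d'.2 ℓ.1
    rw [seqC_add, smul_add]
  map_smul' t d := by
    refine PiLp.ext fun ℓ => ?_
    show (‖cp ℓ.1 - P‖)⁻¹ • seqC 0 α β γ (t • d.1) (t • d.2) ℓ.1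
      = t • ((‖cp ℓ.1 - P‖)⁻¹ • seqC 0 α β γ d.1 d.2 ℓ.1)
    rw [seqC_smul, smul_comm]


set_option maxHeartbeats 1000000 in
/-- the least-squares functional `φ` has a unique minimizer over
`(c₁, c₂)`, and all resulting points lie on the plane `Π` through `P` with normal `n`. -/
theorem stmt11 (n : ℕ) (hn : 2 ≤ n) (P nv : EuclideanSpace ℝ (Fin 3)) (hnv : ‖nv‖ = 1)
    (cp : ℕ → EuclideanSpace ℝ (Fin 3))
    (hcp : ∀ ℓ ∈ Finset.Icc 1 n, ⟪cp ℓ - P, nv⟫ = 0 ∧ cp ℓ ≠ P)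
    (α β γ : ℕ → ℝ) (hbary : ∀ ℓ, 3 ≤ ℓ → α ℓ + β ℓ + γ ℓ = 1) :
    ∃ x : EuclideanSpace ℝ (Fin 3) × EuclideanSpace ℝ (Fin 3),
      (∀ y : EuclideanSpace ℝ (Fin 3) × EuclideanSpace ℝ (Fin 3), (∑ ℓ ∈ Finset.Icc 1 n, ‖seqC P α β γ x.1 x.2 ℓ - cp ℓ‖ ^ 2 / ‖cp ℓ - P‖ ^ 2)
          ≤ ∑ ℓ ∈ Finset.Icc 1 n, ‖seqC P α β γ y.1 y.2 ℓ - cp ℓ‖ ^ 2 / ‖cp ℓ - P‖ ^ 2) ∧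
      (∀ y : EuclideanSpace ℝ (Fin 3) × EuclideanSpace ℝ (Fin 3), (∀ z : EuclideanSpace ℝ (Fin 3) × EuclideanSpace ℝ (Fin 3), (∑ ℓ ∈ Finset.Icc 1 n,
              ‖seqC P α β γ y.1 y.2 ℓ - cp ℓ‖ ^ 2 / ‖cp ℓ - P‖ ^ 2)
            ≤ ∑ ℓ ∈ Finset.Icc 1 n, ‖seqC P α β γ z.1 z.2 ℓ - cp ℓ‖ ^ 2 / ‖cp ℓ - P‖ ^ 2)
          → y = x) ∧
      (∀ ℓ ∈ Finset.Icc 1 n, ⟪seqC P α β γ x.1 x.2 ℓ - P, nv⟫ = 0) := by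
  classical
  set A := Amap n P cp α β γ with hAdef
  set b : PiLp 2 (fun _ : ↥(Finset.Icc 1 n) => EuclideanSpace ℝ (Fin 3)) :=
    WithLp.toLp 2 (fun ℓ : ↥(Finset.Icc 1 n) => (‖cp ℓ.1 - P‖)⁻¹ • (cp ℓ.1 - P)) with hbdef
  set K := LinearMap.range A with hKdef
  have hA : ∀ (d : EuclideanSpace ℝ (Fin 3) × EuclideanSpace ℝ (Fin 3)) (ℓ : ↥(Finset.Icc 1 n)),
      A d ℓ = (‖cp ℓ.1 - P‖)⁻¹ • seqC 0 α β γ d.1 d.2 ℓ.1 := fun _ _ => rfl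
  have hne : ∀ ℓ ∈ Finset.Icc 1 n, ‖cp ℓ - P‖ ≠ 0 := by
    intro ℓ hℓ
    simpa [sub_eq_zero] using (hcp ℓ hℓ).2
  have hW : ∀ z : PiLp 2 (fun _ : ↥(Finset.Icc 1 n) => EuclideanSpace ℝ (Fin 3)),
      ‖z‖ ^ 2 = ∑ ℓ : ↥(Finset.Icc 1 n), ‖z ℓ‖ ^ 2 := fun z => PiLp.norm_sq_eq_of_L2 _ z
  -- rewrite φ as a squared norm
  have hφ : ∀ y : EuclideanSpace ℝ (Fin 3) × EuclideanSpace ℝ (Fin 3),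
      (∑ ℓ ∈ Finset.Icc 1 n, ‖seqC P α β γ y.1 y.2 ℓ - cp ℓ‖ ^ 2 / ‖cp ℓ - P‖ ^ 2)
        = ‖A (y.1 - P, y.2 - P) - b‖ ^ 2 := by
    intro y
    rw [hW, ← Finset.sum_coe_sort (Finset.Icc 1 n)
      (fun ℓ => ‖seqC P α β γ y.1 y.2 ℓ - cp ℓ‖ ^ 2 / ‖cp ℓ - P‖ ^ 2)]
    refine Finset.sum_congr rfl ?_
    intro ℓ _
    have hcomp : (A (y.1 - P, y.2 - P) - b) ℓ
        = (‖cp ℓ.1 - P‖)⁻¹ • (seqC P α β γ y.1 y.2 ℓ.1 - cp ℓ.1) := by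
      show (‖cp ℓ.1 - P‖)⁻¹ • seqC 0 α β γ (y.1 - P) (y.2 - P) ℓ.1
        - (‖cp ℓ.1 - P‖)⁻¹ • (cp ℓ.1 - P) = _
      rw [← smul_sub, seqC_translate P α β γ hbary y.1 y.2 ℓ.1]
      congr 1
      abel
    rw [hcomp, norm_smul, Real.norm_eq_abs, abs_inv, abs_norm, mul_pow, inv_pow]
    have h0 := hne ℓ.1 ℓ.2
    field_simp
  -- orthogonal projection of b onto the range of A
  obtain ⟨dstar, hdstar⟩ : ∃ d, A d
      = (K.orthogonalProjectionOnto b : PiLp 2 (fun _ : ↥(Finset.Icc 1 n) => EuclideanSpace ℝ (Fin 3))) :=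
    LinearMap.mem_range.mp (SetLike.coe_mem (K.orthogonalProjectionOnto b))
  have hAinj : ∀ d d', A d = A d' → d = d' := by
    intro d d' h
    have h1m : (1 : ℕ) ∈ Finset.Icc 1 n := by simp [Finset.mem_Icc]; omega
    have h2m : (2 : ℕ) ∈ Finset.Icc 1 n := Finset.mem_Icc.mpr ⟨by omega, hn⟩
    have e1 := congrArg (fun z => z ⟨1, h1m⟩) h
    have e2 := congrArg (fun z => z ⟨2, h2m⟩) h
    have d1 : d.1 = d'.1 := by
      have : (‖cp 1 - P‖)⁻¹ • d.1 = (‖cp 1 - P‖)⁻¹ • d'.1 := e1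
      exact smul_right_injective _ (inv_ne_zero (hne 1 h1m)) this
    have d2 : d.2 = d'.2 := by
      have : (‖cp 2 - P‖)⁻¹ • d.2 = (‖cp 2 - P‖)⁻¹ • d'.2 := e2
      exact smul_right_injective _ (inv_ne_zero (hne 2 h2m)) this
    exact Prod.ext d1 d2
  -- Pythagoras
  have hpyth : ∀ z ∈ K, ‖b - z‖ ^ 2 = ‖b - A dstar‖ ^ 2 + ‖A dstar - z‖ ^ 2 := by
    intro z hz
    have horth : ⟪b - A dstar, A dstar - z⟫ = 0 := by
      rw [hdstar]
      exact K.starProjection_inner_eq_zero b _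
        (K.sub_mem (SetLike.coe_mem _) hz)
    have hsplit : b - z = (b - A dstar) + (A dstar - z) := by abel
    rw [hsplit, norm_add_sq_real, horth]
    ring
  refine ⟨(P + dstar.1, P + dstar.2), ?_, ?_, ?_⟩
  · intro y
    rw [hφ, hφ]
    have hx : ((P + dstar.1, P + dstar.2).1 - P, (P + dstar.1, P + dstar.2).2 - P) = dstar := by
      simp
    rw [hx]
    have := hpyth (A (y.1 - P, y.2 - P)) (LinearMap.mem_range_self A _)
    rw [norm_sub_rev b (A (y.1 - P, y.2 - P)), norm_sub_rev b (A dstar)] at this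
    nlinarith [sq_nonneg ‖A dstar - A (y.1 - P, y.2 - P)‖]
  · intro y hy
    have hx : ((P + dstar.1, P + dstar.2).1 - P, (P + dstar.1, P + dstar.2).2 - P) = dstar := by
      simp
    have hle := hy (P + dstar.1, P + dstar.2)
    rw [hφ, hφ, hx] at hle
    have hpy := hpyth (A (y.1 - P, y.2 - P)) (LinearMap.mem_range_self A _)
    rw [norm_sub_rev b (A (y.1 - P, y.2 - P)), norm_sub_rev b (A dstar)] at hpy
    have hzero : ‖A dstar - A (y.1 - P, y.2 - P)‖ = 0 := by
      nlinarith [sq_nonneg ‖A dstar - A (y.1 - P, y.2 - P)‖,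
        norm_nonneg (A dstar - A (y.1 - P, y.2 - P))]
    have hAeq : A (y.1 - P, y.2 - P) = A dstar := by
      have := norm_eq_zero.mp hzero
      have := sub_eq_zero.mp this
      exact this.symm
    have hd := hAinj _ _ hAeq
    have h1 : y.1 = P + dstar.1 := by
      have := congrArg Prod.fst hd
      simp only at this
      rw [← this]; abel
    have h2 : y.2 = P + dstar.2 := by
      have := congrArg Prod.snd hd
      simp only at this
      rw [← this]; abel
    exact Prod.ext h1 h2
  · -- the plane property
    have hnv0 : nv ≠ 0 := by
      intro h; rw [h, norm_zero] at hnv; norm_num at hnv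
    set s : ℝ := ⟪dstar.1, nv⟫ with hs
    set t : ℝ := ⟪dstar.2, nv⟫ with ht
    have key : s = 0 ∧ t = 0 := by
      set dn : EuclideanSpace ℝ (Fin 3) × EuclideanSpace ℝ (Fin 3) := (s • nv, t • nv) with hdn
      set dt : EuclideanSpace ℝ (Fin 3) × EuclideanSpace ℝ (Fin 3) :=
        (dstar.1 - s • nv, dstar.2 - t • nv) with hdt
      have hdt1 : ⟪dt.1, nv⟫ = 0 := by
        simp only [hdt, inner_sub_left, real_inner_smul_left, real_inner_self_eq_norm_sq, hnv]
        rw [← hs]; ring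
      have hdt2 : ⟪dt.2, nv⟫ = 0 := by
        simp only [hdt, inner_sub_left, real_inner_smul_left, real_inner_self_eq_norm_sq, hnv]
        rw [← ht]; ring
      have hsum : dstar = dt + dn := by
        apply Prod.ext <;> simp [hdt, hdn]
      have horthW : ⟪A dt - b, A dn⟫ = 0 := by
        rw [PiLp.inner_apply]
        refine Finset.sum_eq_zero ?_
        intro ℓ _
        obtain ⟨r, hr⟩ := seqC_normal α β γ nv s t ℓ.1
        have h1 : A dn ℓ = (‖cp ℓ.1 - P‖)⁻¹ • (r • nv) := by
          rw [hA]; rw [show dn.1 = s • nv from rfl, show dn.2 = t • nv from rfl, hr]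
        have h2 : ⟪(A dt - b) ℓ, nv⟫ = 0 := by
          show ⟪(‖cp ℓ.1 - P‖)⁻¹ • seqC 0 α β γ dt.1 dt.2 ℓ.1
            - (‖cp ℓ.1 - P‖)⁻¹ • (cp ℓ.1 - P), nv⟫ = 0
          rw [inner_sub_left, real_inner_smul_left, real_inner_smul_left,
            seqC_inner_zero α β γ nv _ _ hdt1 hdt2, (hcp ℓ.1 ℓ.2).1]
          ring
        rw [h1, real_inner_smul_right, real_inner_smul_right, h2]
        ring
      have hsplit : ‖A dstar - b‖ ^ 2 = ‖A dt - b‖ ^ 2 + ‖A dn‖ ^ 2 := by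
        have h3 : A dstar - b = (A dt - b) + A dn := by
          rw [hsum, map_add]; abel
        rw [h3, norm_add_sq_real, horthW]
        ring
      have hle : ‖b - A dstar‖ ^ 2 ≤ ‖b - A dt‖ ^ 2 := by
        have := hpyth (A dt) (LinearMap.mem_range_self A _)
        nlinarith [sq_nonneg ‖A dstar - A dt‖]
      rw [norm_sub_rev b (A dstar), norm_sub_rev b (A dt)] at hle
      have hdn0 : ‖A dn‖ ^ 2 ≤ 0 := by linarith
      have hdnz : A dn = 0 := by
        have : ‖A dn‖ = 0 := by nlinarith [norm_nonneg (A dn)]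
        exact norm_eq_zero.mp this
      have : dn = 0 := hAinj dn 0 (by rw [hdnz, map_zero])
      have hs0 : s • nv = 0 := congrArg Prod.fst this
      have ht0 : t • nv = 0 := congrArg Prod.snd this
      constructor
      · rcases smul_eq_zero.mp hs0 with h | h
        · exact h
        · exact absurd h hnv0
      · rcases smul_eq_zero.mp ht0 with h | h
        · exact h
        · exact absurd h hnv0
    intro ℓ hℓ
    have htr := seqC_translate P α β γ hbary (P + dstar.1) (P + dstar.2) ℓ
    have hx1 : (P + dstar.1) - P = dstar.1 := by abel
    have hx2 : (P + dstar.2) - P = dstar.2 := by abel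
    rw [hx1, hx2] at htr
    show ⟪seqC P α β γ (P + dstar.1) (P + dstar.2) ℓ - P, nv⟫ = 0
    rw [htr]
    have : P + seqC 0 α β γ dstar.1 dstar.2 ℓ - P = seqC 0 α β γ dstar.1 dstar.2 ℓ := by abel
    rw [this]
    exact seqC_inner_zero α β γ nv _ _ key.1 key.2 ℓ
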